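/- Let e1, e2 be odd, e3 = −e1−e2 with 2 ∥ e3, n odd, d1, d2, d3 odd integers with (d1,d2,d3) ≡ (−1,−1,1) mod 4 and d1·d2·d3 a rational square. Then the three conditions [e1·n·d3, d1]₂ = 0, [e2·n·d1, d2]₂ = 0, and [e3·n·d2, d3]₂ = 0 cannot all hold simultaneously. -/

import Mathlib

private lemma zmod4_lemma : ∀ X Y Z : ZMod (2^2), 3*X^2+3*Y^2 = Z^2 →
    (X.val % 2 = 0 ∧ Y.val % 2 = 0 ∧ Z.val % 2 = 0) := by
  show ∀ X Y Z : ZMod 4, _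
  decide

private lemma dvd_of_val (X : ZMod (2^2)) (h : X.val % 2 = 0) : (2 : ZMod (2^2)) ∣ X := by
  obtain ⟨k, hk⟩ := Nat.dvd_of_mod_eq_zero h
  refine ⟨(k : ZMod (2^2)), ?_⟩
  conv_lhs => rw [← ZMod.natCast_zmod_val X]
  rw [hk]; push_cast; ring

private lemma two_dvd_of_toZModPow (u : ℤ_[2]) (h : (2 : ZMod (2^2)) ∣ PadicInt.toZModPow 2 u) :
    (2 : ℤ_[2]) ∣ u := by
  obtain ⟨t, ht⟩ := h
  have h4 : (((2:ℕ):ℤ_[2])^2) ∣ (u - 2 * ((t.val : ℤ_[2]))) := by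
    rw [← Ideal.mem_span_singleton]
    have hker := PadicInt.ker_toZModPow (p := 2) 2
    rw [← hker, RingHom.mem_ker, map_sub, map_mul, map_natCast, map_ofNat,
      ZMod.natCast_zmod_val, ht, sub_self]
  obtain ⟨s, hs⟩ := h4
  have h2 : ((2:ℕ):ℤ_[2]) = 2 := by norm_cast
  rw [h2] at hs
  exact ⟨2*s + t.val, by linear_combination hs⟩

private lemma helper (a b : ℤ) (ha : a % 4 = 3) (hb : b % 4 = 3) (X Y Z : ℤ_[2])
    (heq : (a : ℤ_[2]) * X^2 + (b : ℤ_[2]) * Y^2 = Z^2) :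
    ‖X‖ < 1 ∧ ‖Y‖ < 1 ∧ ‖Z‖ < 1 := by
  have cast3 : ∀ c : ℤ, c % 4 = 3 → ((c : ZMod (2^2))) = 3 := by
    intro c hc
    obtain ⟨k, hk⟩ : ∃ k, c = 4 * k + 3 := ⟨c / 4, by omega⟩
    rw [hk]; push_cast
    rw [show ((4:ZMod (2^2))) = 0 from by decide]; ring
  set φ := PadicInt.toZModPow (p := 2) 2 with hφ
  have hmap := congrArg φ heq
  rw [map_add, map_mul, map_mul, map_pow, map_pow, map_pow, map_intCast, map_intCast,
    cast3 a ha, cast3 b hb] at hmap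
  obtain ⟨hX, hY, hZ⟩ := zmod4_lemma (φ X) (φ Y) (φ Z) hmap
  have h2 : ((2:ℕ):ℤ_[2]) = 2 := by norm_cast
  refine ⟨?_, ?_, ?_⟩ <;> rw [PadicInt.norm_lt_one_iff_dvd, h2]
  · exact two_dvd_of_toZModPow X (dvd_of_val _ hX)
  · exact two_dvd_of_toZModPow Y (dvd_of_val _ hY)
  · exact two_dvd_of_toZModPow Z (dvd_of_val _ hZ)

/-- The additive Hilbert symbol `[a, b]₂ ∈ 𝔽₂` over `ℚ₂` vanishes
(equivalently, the multiplicative Hilbert symbol `(a, b)₂ = 1`) iff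
`z² = a·x² + b·y²` has a nontrivial solution over `ℚ₂`. -/
def HilbertVanish2 (a b : ℤ) : Prop :=
  ∃ x y z : ℚ_[2], ¬ (x = 0 ∧ y = 0 ∧ z = 0) ∧
    (a : ℚ_[2]) * x ^ 2 + (b : ℚ_[2]) * y ^ 2 = z ^ 2

private lemma key (a b : ℤ) (ha : a % 4 = 3) (hb : b % 4 = 3) : ¬ HilbertVanish2 a b := by
  rintro ⟨x, y, z, hnz, heq⟩
  set M := max (max ‖x‖ ‖y‖) ‖z‖ with hMdef
  have hxM : ‖x‖ ≤ M := le_max_of_le_left (le_max_left _ _)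
  have hyM : ‖y‖ ≤ M := le_max_of_le_left (le_max_right _ _)
  have hzM : ‖z‖ ≤ M := le_max_right _ _
  have hMpos : 0 < M := by
    rcases lt_or_ge 0 M with h | h
    · exact h
    · exact absurd ⟨norm_le_zero_iff.mp (hxM.trans h), norm_le_zero_iff.mp (hyM.trans h),
        norm_le_zero_iff.mp (hzM.trans h)⟩ hnz
  have hM : M = ‖x‖ ∨ M = ‖y‖ ∨ M = ‖z‖ := by
    rcases max_choice (max ‖x‖ ‖y‖) ‖z‖ with h | h
    · rcases max_choice ‖x‖ ‖y‖ with h2 | h2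
      · exact Or.inl (h.trans h2)
      · exact Or.inr (Or.inl (h.trans h2))
    · exact Or.inr (Or.inr h)
  have hcast2 : ((2:ℕ):ℝ) = 2 := by norm_num
  have hval : ∀ w : ℚ_[2], M = ‖w‖ → ∃ v : ℤ, M = (2:ℝ)^(-v) := by
    intro w hw
    have hw0 : w ≠ 0 := by
      intro h; rw [h, norm_zero] at hw; exact absurd hw hMpos.ne'
    exact ⟨w.valuation, by rw [hw, Padic.norm_eq_zpow_neg_valuation hw0, hcast2]⟩
  obtain ⟨v, hMv⟩ : ∃ v : ℤ, M = (2:ℝ)^(-v) := by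
    rcases hM with h | h | h
    exacts [hval x h, hval y h, hval z h]
  set c : ℚ_[2] := ((2:ℕ):ℚ_[2])^(-v) with hcdef
  have hc : ‖c‖ = (2:ℝ)^v := by
    rw [hcdef, Padic.norm_p_zpow, neg_neg, hcast2]
  have hmulM : (2:ℝ)^v * M = 1 := by
    rw [hMv, ← zpow_add₀ (by norm_num : (2:ℝ) ≠ 0)]; simp
  have hbd : ∀ q : ℚ_[2], ‖q‖ ≤ M → ‖c * q‖ ≤ 1 := by
    intro q hq
    rw [norm_mul, hc]
    calc (2:ℝ)^v * ‖q‖ ≤ (2:ℝ)^v * M := by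
          exact mul_le_mul_of_nonneg_left hq (by positivity)
      _ = 1 := hmulM
  set X : ℤ_[2] := ⟨c * x, hbd x hxM⟩ with hXdef
  set Y : ℤ_[2] := ⟨c * y, hbd y hyM⟩ with hYdef
  set Z : ℤ_[2] := ⟨c * z, hbd z hzM⟩ with hZdef
  have heq2 : (a:ℚ_[2]) * (c*x)^2 + (b:ℚ_[2]) * (c*y)^2 = (c*z)^2 := by
    linear_combination c^2 * heq
  have heqZ : (a : ℤ_[2]) * X^2 + (b:ℤ_[2]) * Y^2 = Z^2 := by
    apply Subtype.ext
    push_cast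
    exact heq2
  obtain ⟨hX1, hY1, hZ1⟩ := helper a b ha hb X Y Z heqZ
  have hnorm : ∀ w : ℚ_[2], M = ‖w‖ → ‖c * w‖ = 1 := by
    intro w hw
    rw [norm_mul, hc, ← hw, hmulM]
  rcases hM with h | h | h
  · rw [PadicInt.norm_def] at hX1; exact absurd (hnorm x h) hX1.ne
  · rw [PadicInt.norm_def] at hY1; exact absurd (hnorm y h) hY1.ne
  · rw [PadicInt.norm_def] at hZ1; exact absurd (hnorm z h) hZ1.ne

private lemma castmod4 (c r : ℤ) (h : c % 4 = r) : (c : ZMod 4) = ((r : ℤ) : ZMod 4) := by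
  obtain ⟨k, hk⟩ : ∃ k, c = 4*k + r := ⟨c/4, by omega⟩
  rw [hk]; push_cast
  rw [show ((4:ZMod 4)) = 0 from rfl]; ring

theorem stmt9 (e1 e2 e3 n d1 d2 d3 : ℤ)
    (ho1 : Odd e1) (ho2 : Odd e2) (he3 : e3 = -e1 - e2)
    (hv2 : 2 ∣ e3 ∧ ¬ (4 ∣ e3)) (hn : Odd n)
    (hodd1 : Odd d1) (hodd2 : Odd d2) (hodd3 : Odd d3)
    (hd1 : d1 % 4 = 3) (hd2 : d2 % 4 = 3) (hd3 : d3 % 4 = 1)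
    (hsq : ∃ r : ℚ, r ≠ 0 ∧ ((d1 * d2 * d3 : ℤ) : ℚ) = r ^ 2) :
    ¬ (HilbertVanish2 (e1 * n * d3) d1 ∧ HilbertVanish2 (e2 * n * d1) d2 ∧
        HilbertVanish2 (e3 * n * d2) d3) := by
  rintro ⟨h1, h2, _⟩
  -- first condition forces e1*n*d3 ≡ 1 mod 4
  have ha1odd : (e1*n*d3) % 2 = 1 := Int.odd_iff.mp ((ho1.mul hn).mul hodd3)
  have ha1 : (e1*n*d3) % 4 = 1 := by
    rcases (by omega : (e1*n*d3) % 4 = 1 ∨ (e1*n*d3) % 4 = 3) with h | h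
    · exact h
    · exact absurd h1 (key _ _ h hd1)
  have ha2odd : (e2*n*d1) % 2 = 1 := Int.odd_iff.mp ((ho2.mul hn).mul hodd1)
  have ha2 : (e2*n*d1) % 4 = 1 := by
    rcases (by omega : (e2*n*d1) % 4 = 1 ∨ (e2*n*d1) % 4 = 3) with h | h
    · exact h
    · exact absurd h2 (key _ _ h hd2)
  -- move to ZMod 4
  have c1 : ((e1*n*d3 : ℤ) : ZMod 4) = 1 := by have := castmod4 _ _ ha1; push_cast at this ⊢; exact this
  have c2 : ((e2*n*d1 : ℤ) : ZMod 4) = 1 := by have := castmod4 _ _ ha2; push_cast at this ⊢; exact this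
  have cd3 : ((d3 : ℤ) : ZMod 4) = 1 := by have := castmod4 _ _ hd3; push_cast at this ⊢; exact this
  have cd1 : ((d1 : ℤ) : ZMod 4) = 3 := by have := castmod4 _ _ hd1; push_cast at this ⊢; exact this
  push_cast at c1 c2
  rw [cd3, mul_one] at c1
  rw [cd1] at c2
  have step : ∀ E1 E2 N : ZMod 4, E1 * N = 1 → E2 * N * 3 = 1 → E1 + E2 = 0 := by decide
  have hsum : ((e1 + e2 : ℤ) : ZMod 4) = 0 := by
    push_cast
    exact step _ _ _ c1 c2
  have hdvd : (4 : ℤ) ∣ (e1 + e2) := by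
    exact_mod_cast (ZMod.intCast_zmod_eq_zero_iff_dvd _ 4).mp hsum
  obtain ⟨hd2', hnd4⟩ := hv2
  omega
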